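/- Let D be a nonempty bounded open subset of ℝ^d, let p : (0,∞) × D × D → [0,∞) be jointly measurable, and set G(x,y) = ∫_0^∞ p(t,x,y) dt, assumed finite for all x,y ∈ D. Let λ₀ < 0, t₀ > 0 and let φ₀ : D → (0,∞) be a bounded function satisfying ∫_D G(x,z) φ₀(z) dz = (−λ₀)^{-1} φ₀(x) and ∫_D p(t₀,x,z) φ₀(z) dz = e^{λ₀ t₀} φ₀(x) for all x ∈ D. Suppose there are a measurable set B₂ ⊆ D with inf_{z ∈ B₂} φ₀(z) > 0 and a constant c₁ > 0 such that ∫_{D∖B₂} G(x,z) dz ≤ c₁ ∫_{B₂} p(t₀,x,z) dz for all x ∈ D. Then there is a constant C > 0 such that ∫_D G(x,z) dz ≤ C φ₀(x) for all x ∈ D. -/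

import Mathlib

open MeasureTheory Set

/-- **Lemma 3.7 of Kim–Song** in analytic form: `p` is the transition density of a killed
non-symmetric Lévy process on a nonempty bounded open set `D`, `G(x,y) = ∫_0^∞ p(t,x,y) dt`
(assumed finite) its Green function, `φ₀` a bounded strictly positive principal
eigenfunction with eigenvalue `λ₀ < 0` (for `G` and for `p(t₀,·,·)`). If `φ₀` is bounded
away from `0` on `B₂ ⊆ D` and `∫_{D∖B₂} G(x,z) dz ≤ c₁ ∫_{B₂} p(t₀,x,z) dz`, then the
expected exit time `∫_D G(x,z) dz` is dominated by `C φ₀(x)`. -/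
theorem expected_exit_time_le_eigenfunction
    {d : ℕ} (D : Set (EuclideanSpace ℝ (Fin d)))
    (hne : D.Nonempty) (hopen : IsOpen D) (hbdd : Bornology.IsBounded D)
    (p : ℝ → EuclideanSpace ℝ (Fin d) → EuclideanSpace ℝ (Fin d) → ℝ)
    (hpmeas : Measurable (fun q : ℝ × EuclideanSpace ℝ (Fin d) × EuclideanSpace ℝ (Fin d) =>
      p q.1 q.2.1 q.2.2))
    (hpnonneg : ∀ t > (0:ℝ), ∀ x ∈ D, ∀ y ∈ D, 0 ≤ p t x y)
    (G : EuclideanSpace ℝ (Fin d) → EuclideanSpace ℝ (Fin d) → ℝ)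
    (hGint : ∀ x ∈ D, ∀ y ∈ D, IntegrableOn (fun t => p t x y) (Ioi (0:ℝ)))
    (hG : ∀ x ∈ D, ∀ y ∈ D, G x y = ∫ t in Ioi (0:ℝ), p t x y)
    (lam₀ : ℝ) (hlam₀ : lam₀ < 0) (t₀ : ℝ) (ht₀ : 0 < t₀)
    (φ₀ : EuclideanSpace ℝ (Fin d) → ℝ)
    (hφ₀pos : ∀ x ∈ D, 0 < φ₀ x) (hφ₀bdd : ∃ M : ℝ, ∀ x ∈ D, φ₀ x ≤ M)
    (hGeig : ∀ x ∈ D, (∫ z in D, G x z * φ₀ z) = (-lam₀)⁻¹ * φ₀ x)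
    (hpeig : ∀ x ∈ D, (∫ z in D, p t₀ x z * φ₀ z) = Real.exp (lam₀ * t₀) * φ₀ x)
    (B₂ : Set (EuclideanSpace ℝ (Fin d))) (hB₂ : B₂ ⊆ D) (hB₂m : MeasurableSet B₂)
    (hinf : 0 < sInf (φ₀ '' B₂))
    (c₁ : ℝ) (hc₁ : 0 < c₁)
    (hmain : ∀ x ∈ D, (∫ z in D \ B₂, G x z) ≤ c₁ * ∫ z in B₂, p t₀ x z) :
    ∃ C > (0:ℝ), ∀ x ∈ D, (∫ z in D, G x z) ≤ C * φ₀ x := by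
  set m := sInf (φ₀ '' B₂) with hmdef
  have hm0 : 0 < m := hinf
  have hmB : ∀ z ∈ B₂, m ≤ φ₀ z := fun z hz =>
    csInf_le ⟨0, fun y hy => by
      obtain ⟨w, hw, rfl⟩ := hy; exact (hφ₀pos w (hB₂ hw)).le⟩ ⟨z, hz, rfl⟩
  have hlam : 0 < (-lam₀)⁻¹ := inv_pos.2 (by linarith)
  have hminv : 0 < m⁻¹ := inv_pos.2 hm0
  refine ⟨c₁ * m⁻¹ * Real.exp (lam₀ * t₀) + m⁻¹ * (-lam₀)⁻¹,
    add_pos (mul_pos (mul_pos hc₁ hminv) (Real.exp_pos _)) (mul_pos hminv hlam), ?_⟩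
  intro x hx
  have hφx := hφ₀pos x hx
  -- integrability of the eigen-integrands, extracted from the eigenvalue identities
  have hGφint : IntegrableOn (fun z => G x z * φ₀ z) D := by
    by_contra h
    have h0 := hGeig x hx
    rw [integral_undef h] at h0
    nlinarith [mul_pos hlam hφx]
  have hpφint : IntegrableOn (fun z => p t₀ x z * φ₀ z) D := by
    by_contra h
    have h0 := hpeig x hx
    rw [integral_undef h] at h0
    nlinarith [mul_pos (Real.exp_pos (lam₀ * t₀)) hφx]
  have hGnn : ∀ z ∈ D, 0 ≤ G x z := by
    intro z hz
    rw [hG x hx z hz]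
    exact setIntegral_nonneg measurableSet_Ioi (fun t ht => hpnonneg t ht x hx z hz)
  have hpnn : ∀ z ∈ D, 0 ≤ p t₀ x z := fun z hz => hpnonneg t₀ ht₀ x hx z hz
  have hpm : Measurable (fun z => p t₀ x z) :=
    hpmeas.comp (measurable_const.prodMk (measurable_const.prodMk measurable_id))
  -- pointwise domination on B₂
  have hptB : ∀ z ∈ B₂, p t₀ x z ≤ m⁻¹ * (p t₀ x z * φ₀ z) := by
    intro z hz
    have h1 : (1:ℝ) ≤ m⁻¹ * φ₀ z := by
      rw [← div_eq_inv_mul]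
      exact (one_le_div hm0).2 (hmB z hz)
    have := mul_le_mul_of_nonneg_left h1 (hpnn z (hB₂ hz))
    nlinarith
  have hGtB : ∀ z ∈ B₂, G x z ≤ m⁻¹ * (G x z * φ₀ z) := by
    intro z hz
    have h1 : (1:ℝ) ≤ m⁻¹ * φ₀ z := by
      rw [← div_eq_inv_mul]
      exact (one_le_div hm0).2 (hmB z hz)
    have := mul_le_mul_of_nonneg_left h1 (hGnn z (hB₂ hz))
    nlinarith
  -- integrability of p(t₀,x,·) on B₂
  have hpφintB : IntegrableOn (fun z => p t₀ x z * φ₀ z) B₂ := hpφint.mono_set hB₂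
  have hpintB : IntegrableOn (fun z => p t₀ x z) B₂ := by
    refine Integrable.mono' (hpφintB.const_mul m⁻¹) hpm.aestronglyMeasurable ?_
    filter_upwards [ae_restrict_mem hB₂m] with z hz
    rw [Real.norm_eq_abs, abs_of_nonneg (hpnn z (hB₂ hz))]
    exact hptB z hz
  -- bound on ∫_{B₂} p
  have hpbound : (∫ z in B₂, p t₀ x z) ≤ m⁻¹ * (Real.exp (lam₀ * t₀) * φ₀ x) := by
    calc (∫ z in B₂, p t₀ x z)
        ≤ ∫ z in B₂, m⁻¹ * (p t₀ x z * φ₀ z) :=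
          setIntegral_mono_on hpintB (hpφintB.const_mul m⁻¹) hB₂m hptB
      _ = m⁻¹ * ∫ z in B₂, p t₀ x z * φ₀ z := integral_const_mul _ _
      _ ≤ m⁻¹ * ∫ z in D, p t₀ x z * φ₀ z := by
          refine mul_le_mul_of_nonneg_left ?_ hminv.le
          refine setIntegral_mono_set hpφint ?_ (HasSubset.Subset.eventuallyLE hB₂)
          filter_upwards [ae_restrict_mem hopen.measurableSet] with z hz
          exact mul_nonneg (hpnn z hz) (hφ₀pos z hz).le
      _ = m⁻¹ * (Real.exp (lam₀ * t₀) * φ₀ x) := by rw [hpeig x hx]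
  by_cases hGi : IntegrableOn (fun z => G x z) D
  · -- split the integral over D
    have hGiB : IntegrableOn (fun z => G x z) B₂ := hGi.mono_set hB₂
    have hGφintB : IntegrableOn (fun z => G x z * φ₀ z) B₂ := hGφint.mono_set hB₂
    have hGbound : (∫ z in B₂, G x z) ≤ m⁻¹ * ((-lam₀)⁻¹ * φ₀ x) := by
      calc (∫ z in B₂, G x z)
          ≤ ∫ z in B₂, m⁻¹ * (G x z * φ₀ z) :=
            setIntegral_mono_on hGiB (hGφintB.const_mul m⁻¹) hB₂m hGtB
        _ = m⁻¹ * ∫ z in B₂, G x z * φ₀ z := integral_const_mul _ _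
        _ ≤ m⁻¹ * ∫ z in D, G x z * φ₀ z := by
            refine mul_le_mul_of_nonneg_left ?_ hminv.le
            refine setIntegral_mono_set hGφint ?_ (HasSubset.Subset.eventuallyLE hB₂)
            filter_upwards [ae_restrict_mem hopen.measurableSet] with z hz
            exact mul_nonneg (hGnn z hz) (hφ₀pos z hz).le
        _ = m⁻¹ * ((-lam₀)⁻¹ * φ₀ x) := by rw [hGeig x hx]
    have hsplit : (∫ z in D, G x z)
        = (∫ z in D \ B₂, G x z) + ∫ z in B₂, G x z := by
      rw [← setIntegral_union disjoint_sdiff_left hB₂m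
        (hGi.mono_set diff_subset) hGiB, diff_union_of_subset hB₂]
    rw [hsplit]
    calc (∫ z in D \ B₂, G x z) + ∫ z in B₂, G x z
        ≤ c₁ * (∫ z in B₂, p t₀ x z) + m⁻¹ * ((-lam₀)⁻¹ * φ₀ x) :=
          add_le_add (hmain x hx) hGbound
      _ ≤ c₁ * (m⁻¹ * (Real.exp (lam₀ * t₀) * φ₀ x)) + m⁻¹ * ((-lam₀)⁻¹ * φ₀ x) :=
          add_le_add_left (mul_le_mul_of_nonneg_left hpbound hc₁.le) _
      _ = (c₁ * m⁻¹ * Real.exp (lam₀ * t₀) + m⁻¹ * (-lam₀)⁻¹) * φ₀ x := by ring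
  · rw [integral_undef hGi]
    have hC : 0 < (c₁ * m⁻¹ * Real.exp (lam₀ * t₀) + m⁻¹ * (-lam₀)⁻¹) * φ₀ x :=
      mul_pos (add_pos (mul_pos (mul_pos hc₁ hminv) (Real.exp_pos _)) (mul_pos hminv hlam)) hφx
    linarith
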